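/- In the finite options-framework model, the trajectory probability is the marginal of the forward variable over the currently active option: for every trajectory h of length t ≥ 1, Pr(H_t = h) = ∑_{o ∈ O} F_t(o). -/

import Mathlib

/-!
Finite options-framework model.

We fix finite nonempty types `S` (states), `A` (actions), `O` (options), an initial
distribution `d0`, a policy over options `po`, option policies `mu`, termination
functions `beta`, and a transition function `P`.  A trajectory of length `n+1` is
given by its states `s : ℕ → S` and actions `a : ℕ → A` (only indices `0..n+1`
resp. `0..n` are relevant).  Latent option sequences are `op : Fin (n+1) → O`
(for `o_0,…,o_n`) and termination sequences `τ : Fin n → Bool` (for `τ_1,…,τ_n`,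
where `τ j` corresponds to time `j+1`).
-/

open Finset

namespace OptionsModel

variable {S A O : Type} [Fintype S] [Fintype A] [Fintype O]
  [Nonempty S] [Nonempty A] [Nonempty O] [DecidableEq O]

/-- Selection factor `c_{j+1}`: if the previous option `o_j = op j.castSucc` terminates
(`τ (j+1) = 1`) at `s_{j+1}`, a new option `o_{j+1} = op j.succ` is selected by the
policy over options; otherwise the option continues. -/
def sel (po : S → O → ℝ) (beta : O → S → ℝ) (s : ℕ → S)
    {k : ℕ} (op : Fin (k + 1) → O) (τ : Fin k → Bool) (j : Fin k) : ℝ :=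
  if τ j then beta (op j.castSucc) (s (j.1 + 1)) * po (s (j.1 + 1)) (op j.succ)
  else if op j.succ = op j.castSucc then 1 - beta (op j.castSucc) (s (j.1 + 1)) else 0

/-- Latent weight `w(h,(o_i),(τ_i))` of a trajectory of length `n+1` together with the
latent option sequence `o_0,…,o_n` and termination sequence `τ_1,…,τ_n`. -/
def w (d0 : S → ℝ) (po : S → O → ℝ) (mu : O → S → A → ℝ) (beta : O → S → ℝ)
    (P : S → A → S → ℝ) (s : ℕ → S) (a : ℕ → A) {n : ℕ}
    (op : Fin (n + 1) → O) (τ : Fin n → Bool) : ℝ :=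
  d0 (s 0) * po (s 0) (op 0) * mu (op 0) (s 0) (a 0)
    * (∏ j : Fin n, P (s j.1) (a j.1) (s (j.1 + 1)) * sel po beta s op τ j
        * mu (op j.succ) (s (j.1 + 1)) (a (j.1 + 1)))
    * P (s n) (a n) (s (n + 1))

/-- Trajectory probability `Pr(H_t = h)` for the trajectory of length `t = n+1`. -/
def prH (d0 : S → ℝ) (po : S → O → ℝ) (mu : O → S → A → ℝ) (beta : O → S → ℝ)
    (P : S → A → S → ℝ) (s : ℕ → S) (a : ℕ → A) (n : ℕ) : ℝ :=
  ∑ op : Fin (n + 1) → O, ∑ τ : Fin n → Bool, w d0 po mu beta P s a op τ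

/-- Joint termination probability `Pr(T_t = 1, H_t = h)` for `t = n+1`. -/
def prT1H (d0 : S → ℝ) (po : S → O → ℝ) (mu : O → S → A → ℝ) (beta : O → S → ℝ)
    (P : S → A → S → ℝ) (s : ℕ → S) (a : ℕ → A) (n : ℕ) : ℝ :=
  ∑ op : Fin (n + 1) → O, ∑ τ : Fin n → Bool,
    w d0 po mu beta P s a op τ * beta (op (Fin.last n)) (s (n + 1))

/-- Joint no-termination probability `Pr(T_t = 0, H_t = h)` for `t = n+1`. -/
def prT0H (d0 : S → ℝ) (po : S → O → ℝ) (mu : O → S → A → ℝ) (beta : O → S → ℝ)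
    (P : S → A → S → ℝ) (s : ℕ → S) (a : ℕ → A) (n : ℕ) : ℝ :=
  ∑ op : Fin (n + 1) → O, ∑ τ : Fin n → Bool,
    w d0 po mu beta P s a op τ * (1 - beta (op (Fin.last n)) (s (n + 1)))

/-- `Pr(O_{t-1} = o, H_t = h)` for `t = n+1`: the latent-weight sum restricted to option
sequences whose last option `o_{t-1}` equals `o`. -/
def prOlastH (d0 : S → ℝ) (po : S → O → ℝ) (mu : O → S → A → ℝ) (beta : O → S → ℝ)
    (P : S → A → S → ℝ) (s : ℕ → S) (a : ℕ → A) (n : ℕ) (o : O) : ℝ :=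
  ∑ op : Fin (n + 1) → O, ∑ τ : Fin n → Bool,
    if op (Fin.last n) = o then w d0 po mu beta P s a op τ else 0

/-- The forward variable `F_m(o)`: `F_0(o) = d0(s_0)·π(s_0,o)` and, for `m ≥ 1`, the sum
over option sequences `o_0,…,o_m` with `o_m = o` and termination sequences `τ_1,…,τ_m`
of `d0(s_0)·π(s_0,o_0)·(∏_{i=0}^{m-1} μ_{o_i}(s_i,a_i)·P(s_i,a_i,s_{i+1}))·(∏_{i=1}^m c_i)`. -/
def fwd (d0 : S → ℝ) (po : S → O → ℝ) (mu : O → S → A → ℝ) (beta : O → S → ℝ)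
    (P : S → A → S → ℝ) (s : ℕ → S) (a : ℕ → A) : ℕ → O → ℝ
  | 0, o => d0 (s 0) * po (s 0) o
  | m + 1, o =>
    ∑ op : Fin (m + 2) → O, ∑ τ : Fin (m + 1) → Bool,
      if op (Fin.last (m + 1)) = o then
        d0 (s 0) * po (s 0) (op 0)
          * (∏ j : Fin (m + 1),
              mu (op j.castSucc) (s j.1) (a j.1) * P (s j.1) (a j.1) (s (j.1 + 1)))
          * (∏ j : Fin (m + 1), sel po beta s op τ j)
      else 0

/-- `Pr(O_t = o, T_t = 0, H_t = h_t)` for `t = n+1`: the `F_t(o)` sum restricted to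
termination sequences with `τ_t = 0`. -/
def prOT0H (d0 : S → ℝ) (po : S → O → ℝ) (mu : O → S → A → ℝ) (beta : O → S → ℝ)
    (P : S → A → S → ℝ) (s : ℕ → S) (a : ℕ → A) (n : ℕ) (o : O) : ℝ :=
  ∑ op : Fin (n + 2) → O, ∑ τ : Fin (n + 1) → Bool,
    if op (Fin.last (n + 1)) = o ∧ τ (Fin.last n) = false then
      d0 (s 0) * po (s 0) (op 0)
        * (∏ j : Fin (n + 1),
            mu (op j.castSucc) (s j.1) (a j.1) * P (s j.1) (a j.1) (s (j.1 + 1)))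
        * (∏ j : Fin (n + 1), sel po beta s op τ j)
    else 0

/-- The recursive function `f(h,o,i)` of Theorem 2: `f(h,o,i) = 1` for `i ≥ t` and
otherwise the termination/continuation recursion. -/
def fRec (po : S → O → ℝ) (mu : O → S → A → ℝ) (beta : O → S → ℝ)
    (s : ℕ → S) (a : ℕ → A) (t : ℕ) (o : O) (i : ℕ) : ℝ :=
  if h : t ≤ i then 1
  else
    beta o (s i) * (∑ o' : O, po (s i) o' * mu o' (s i) (a i) * fRec po mu beta s a t o' (i + 1))
      + (1 - beta o (s i)) * mu o (s i) (a i) * fRec po mu beta s a t o (i + 1)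
termination_by t - i
decreasing_by all_goals omega

/-- The option active at time `i + j - 1` just before choosing `o_{i+j}`: it is `o` when
`j = 0` (the given previous option) and `op (j-1)` otherwise. -/
def prevOp {k : ℕ} (o : O) (op : Fin k → O) (j : Fin k) : O :=
  if _ : j.1 = 0 then o else op ⟨j.1 - 1, Nat.lt_of_le_of_lt (Nat.sub_le _ _) j.2⟩

/-- Suffix probability `G(h,o,i)` for `1 ≤ i ≤ t`: the probability of generating
`(s_i,a_i,…,s_t)` given previous state `s_{i-1}`, active option `o` and previous action
`a_{i-1}`.  For `i = t` it is `P(s_{t-1},a_{t-1},s_t)`; for `i < t` it is the sum over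
latent option sequences `o_i,…,o_{t-1}` and termination indicators `τ_i,…,τ_{t-1}`
(with `o_{i-1} := o`) of `(∏_{j=i}^{t-1} P(s_{j-1},a_{j-1},s_j)·c_j·μ_{o_j}(s_j,a_j))
· P(s_{t-1},a_{t-1},s_t)`. -/
def G (po : S → O → ℝ) (mu : O → S → A → ℝ) (beta : O → S → ℝ)
    (P : S → A → S → ℝ) (s : ℕ → S) (a : ℕ → A) (t i : ℕ) (o : O) : ℝ :=
  if i < t then
    ∑ op : Fin (t - i) → O, ∑ τ : Fin (t - i) → Bool,
      (∏ j : Fin (t - i),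
          P (s (i + j.1 - 1)) (a (i + j.1 - 1)) (s (i + j.1))
            * (if τ j then
                beta (prevOp o op j) (s (i + j.1)) * po (s (i + j.1)) (op j)
              else if op j = prevOp o op j then 1 - beta (prevOp o op j) (s (i + j.1))
              else 0)
            * mu (op j) (s (i + j.1)) (a (i + j.1)))
        * P (s (t - 1)) (a (t - 1)) (s t)
  else P (s (t - 1)) (a (t - 1)) (s t)

variable (d0 : S → ℝ) (po : S → O → ℝ) (mu : O → S → A → ℝ)
  (beta : O → S → ℝ) (P : S → A → S → ℝ) (s : ℕ → S) (a : ℕ → A)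

set_option linter.unusedSectionVars false in
private lemma sum_snoc {X : Type} [Fintype X] {k : ℕ} (g : (Fin (k + 1) → X) → ℝ) :
    ∑ f : Fin (k + 1) → X, g f = ∑ x : X, ∑ f : Fin k → X, g (Fin.snoc f x) := by
  rw [← Equiv.sum_comp (Fin.snocEquiv (fun _ => X)) g, Fintype.sum_prod_type]
  rfl

set_option linter.unusedSectionVars false in
private lemma sel_snoc (po : S → O → ℝ) (beta : O → S → ℝ) (s : ℕ → S) {n : ℕ}
    (op : Fin (n + 1) → O) (o' : O) (τ : Fin n → Bool) (b : Bool) (j : Fin n) :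
    sel po beta s (Fin.snoc op o' : Fin (n + 2) → O) (Fin.snoc τ b) j.castSucc
      = sel po beta s op τ j := by
  simp [sel, Fin.snoc_castSucc, Fin.succ_castSucc, - Fin.castSucc_succ]

set_option linter.unusedSectionVars false in
private lemma sel_snoc_last (po : S → O → ℝ) (beta : O → S → ℝ) (s : ℕ → S) {n : ℕ}
    (op : Fin (n + 1) → O) (o' : O) (τ : Fin n → Bool) (b : Bool) :
    sel po beta s (Fin.snoc op o' : Fin (n + 2) → O) (Fin.snoc τ b) (Fin.last n)
      = (if b then beta (op (Fin.last n)) (s (n + 1)) * po (s (n + 1)) o'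
         else if o' = op (Fin.last n) then 1 - beta (op (Fin.last n)) (s (n + 1)) else 0) := by
  have h1 : (Fin.last n).succ = Fin.last (n + 1) := rfl
  simp [sel, h1, Fin.snoc_castSucc, Fin.snoc_last]

private lemma sum_bool_option {O : Type} [Fintype O] [DecidableEq O]
    (po' : O → ℝ) (hpo' : ∑ o : O, po' o = 1) (X β : ℝ) (c : O) :
    (∑ b : Bool, ∑ o' : O,
        X * (if b then β * po' o' else if o' = c then 1 - β else 0)) = X := by
  have hb : ∀ b : Bool,
      (∑ o' : O, X * (if b then β * po' o' else if o' = c then 1 - β else 0))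
        = X * (if b then β else 1 - β) := by
    intro b
    cases b
    · simp [Finset.sum_ite_eq']
    · simp [← Finset.mul_sum, ← Finset.sum_mul, hpo']
  rw [Fintype.sum_bool, hb, hb]
  simp
  ring

/-- For every trajectory of length `t = n+1 ≥ 1`, the trajectory
probability is the marginal of the forward variable at time `t`:
`Pr(H_t = h) = ∑_o F_t(o)`. -/
theorem trajectory_prob_forward_marginal
    (hd0 : ∀ x, 0 ≤ d0 x) (hd0s : ∑ x : S, d0 x = 1)
    (hpo : ∀ x o, 0 ≤ po x o) (hpos : ∀ x : S, ∑ o : O, po x o = 1)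
    (hmu : ∀ o x u, 0 ≤ mu o x u) (hmus : ∀ o x, ∑ u : A, mu o x u = 1)
    (hbeta : ∀ o x, 0 ≤ beta o x ∧ beta o x ≤ 1)
    (hP : ∀ x u y, 0 ≤ P x u y) (hPs : ∀ x u, ∑ y : S, P x u y = 1)
    (n : ℕ) :
    prH d0 po mu beta P s a n = ∑ o : O, fwd d0 po mu beta P s a (n + 1) o := by
  -- Step 1: remove the `if` in the RHS by marginalizing over `o`.
  have h1 : ∑ o : O, fwd d0 po mu beta P s a (n + 1) o =
      ∑ op : Fin (n + 2) → O, ∑ τ : Fin (n + 1) → Bool,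
        d0 (s 0) * po (s 0) (op 0)
          * (∏ j : Fin (n + 1),
              mu (op j.castSucc) (s j.1) (a j.1) * P (s j.1) (a j.1) (s (j.1 + 1)))
          * (∏ j : Fin (n + 1), sel po beta s op τ j) := by
    show (∑ o : O, ∑ op : Fin (n + 2) → O, ∑ τ : Fin (n + 1) → Bool, _) = _
    rw [Finset.sum_comm]
    refine Finset.sum_congr rfl fun op _ => ?_
    rw [Finset.sum_comm]
    refine Finset.sum_congr rfl fun τ _ => ?_
    simp
  rw [h1, sum_snoc, Finset.sum_comm]
  unfold prH
  refine Finset.sum_congr rfl fun op _ => ?_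
  -- Step 2: split off the last option / termination bit.
  have h2 : ∀ o' : O,
      (∑ τ : Fin (n + 1) → Bool,
        d0 (s 0) * po (s 0) ((Fin.snoc op o' : Fin (n + 2) → O) 0)
          * (∏ j : Fin (n + 1),
              mu ((Fin.snoc op o' : Fin (n + 2) → O) j.castSucc) (s j.1) (a j.1)
                * P (s j.1) (a j.1) (s (j.1 + 1)))
          * (∏ j : Fin (n + 1), sel po beta s (Fin.snoc op o' : Fin (n + 2) → O) τ j)) =
      ∑ b : Bool, ∑ τ : Fin n → Bool,
        (d0 (s 0) * po (s 0) (op 0)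
          * (∏ j : Fin (n + 1),
              mu (op j) (s j.1) (a j.1) * P (s j.1) (a j.1) (s (j.1 + 1)))
          * (∏ j : Fin n, sel po beta s op τ j))
          * (if b then beta (op (Fin.last n)) (s (n + 1)) * po (s (n + 1)) o'
             else if o' = op (Fin.last n) then
               1 - beta (op (Fin.last n)) (s (n + 1)) else 0) := by
    intro o'
    rw [sum_snoc (fun τ => _)]
    refine Finset.sum_congr rfl fun b _ => Finset.sum_congr rfl fun τ _ => ?_
    have hz : ((0 : Fin (n + 2))) = (0 : Fin (n + 1)).castSucc := rfl
    rw [hz, Fin.snoc_castSucc]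
    rw [Fin.prod_univ_castSucc (f := fun j => sel po beta s (Fin.snoc op o') (Fin.snoc τ b) j)]
    rw [Finset.prod_congr rfl fun (j : Fin n) _ => sel_snoc po beta s op o' τ b j,
      sel_snoc_last po beta s op o' τ b,
      Finset.prod_congr rfl fun (j : Fin (n + 1)) _ => by rw [Fin.snoc_castSucc]]
    ring
  rw [Finset.sum_congr rfl fun o' _ => h2 o']
  -- Step 3: reorder the sums so that `o'` and `b` are innermost.
  rw [Finset.sum_comm, Finset.sum_congr rfl fun (b : Bool) _ => Finset.sum_comm,
    Finset.sum_comm]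
  refine Finset.sum_congr rfl fun τ _ => ?_
  -- Step 4: sum out the last option and the termination bit.
  rw [sum_bool_option (po (s (n + 1))) (hpos (s (n + 1)))
    (d0 (s 0) * po (s 0) (op 0)
      * (∏ j : Fin (n + 1), mu (op j) (s j.1) (a j.1) * P (s j.1) (a j.1) (s (j.1 + 1)))
      * (∏ j : Fin n, sel po beta s op τ j))
    (beta (op (Fin.last n)) (s (n + 1))) (op (Fin.last n))]
  -- Step 5: identify the remaining expression with the latent weight `w`.
  have key : (∏ j : Fin (n + 1), mu (op j) (s j.1) (a j.1) * P (s j.1) (a j.1) (s (j.1 + 1)))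
      = mu (op 0) (s 0) (a 0)
        * (∏ j : Fin n, mu (op j.succ) (s (j.1 + 1)) (a (j.1 + 1)))
        * ((∏ j : Fin n, P (s j.1) (a j.1) (s (j.1 + 1))) * P (s n) (a n) (s (n + 1))) := by
    rw [Finset.prod_mul_distrib,
      Fin.prod_univ_succ (f := fun j : Fin (n + 1) => mu (op j) (s j.1) (a j.1)),
      Fin.prod_univ_castSucc (f := fun j : Fin (n + 1) => P (s j.1) (a j.1) (s (j.1 + 1)))]
    simp only [Fin.val_succ, Fin.coe_castSucc, Fin.val_zero, Fin.val_last]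
  have split : (∏ j : Fin n, P (s j.1) (a j.1) (s (j.1 + 1)) * sel po beta s op τ j
        * mu (op j.succ) (s (j.1 + 1)) (a (j.1 + 1)))
      = (∏ j : Fin n, P (s j.1) (a j.1) (s (j.1 + 1)))
        * (∏ j : Fin n, sel po beta s op τ j)
        * (∏ j : Fin n, mu (op j.succ) (s (j.1 + 1)) (a (j.1 + 1))) := by
    rw [Finset.prod_mul_distrib, Finset.prod_mul_distrib]
  unfold w
  rw [split, key]
  ring

end OptionsModel
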